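/- Let f be a Laurent polynomial in r variables with Newton polytope Δ(f), and let n ≥ 1. Then the Newton polytope of the cyclic resultant f̃_n(z) = ∏_{k_1,...,k_r=0}^{n-1} f(e^{2πi k_1/n} z_1, ..., e^{2πi k_r/n} z_r) is n^r · Δ(f), and consequently the number of nonzero monomial terms of f̃_n is at most the number of lattice points in n^{r−1}·Δ(f). -/

import Mathlib

open Pointwise

/-- The Laurent polynomial f(u₁z₁, ..., u_r z_r). -/
noncomputable def twist {r : ℕ} (u : Fin r → ℂ) (f : AddMonoidAlgebra ℂ (Fin r → ℤ)) :
    AddMonoidAlgebra ℂ (Fin r → ℤ) :=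
  AddMonoidAlgebra.ofCoeff (f.coeff.sum fun j c => Finsupp.single j (c * ∏ i, u i ^ j i))

/-- The cyclic resultant f̃ₙ. -/
noncomputable def cyc {r : ℕ} (n : ℕ) (f : AddMonoidAlgebra ℂ (Fin r → ℤ)) :
    AddMonoidAlgebra ℂ (Fin r → ℤ) :=
  ∏ k : Fin r → Fin n, twist (fun i => Complex.exp (2 * Real.pi * Complex.I * (k i : ℕ) / n)) f

/-- The Newton polytope of a Laurent polynomial: the convex hull of its exponent vectors. -/
noncomputable def newton {r : ℕ} (f : AddMonoidAlgebra ℂ (Fin r → ℤ)) : Set (Fin r → ℝ) :=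
  convexHull ℝ ((fun j : Fin r → ℤ => fun i => (j i : ℝ)) '' (f.coeff.support : Set (Fin r → ℤ)))

lemma twist_apply {r : ℕ} (u : Fin r → ℂ) (f : AddMonoidAlgebra ℂ (Fin r → ℤ)) (a : Fin r → ℤ) :
    (twist u f).coeff a = f.coeff a * ∏ i, u i ^ a i := by
  classical
  rw [twist, AddMonoidAlgebra.coeff_ofCoeff, Finsupp.sum_apply, Finsupp.sum]
  simp only [Finsupp.single_apply]
  rw [Finset.sum_ite_eq' f.coeff.support a (fun j => f.coeff j * ∏ i, u i ^ j i)]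
  by_cases h : a ∈ f.coeff.support
  · simp [h]
  · simp [h, Finsupp.notMem_support_iff.mp h]

lemma support_twist_subset {r : ℕ} (u : Fin r → ℂ) (f : AddMonoidAlgebra ℂ (Fin r → ℤ)) :
    (twist u f).coeff.support ⊆ f.coeff.support := fun a ha => by
  rw [Finsupp.mem_support_iff] at *
  intro h; apply ha; rw [twist_apply, h, zero_mul]

lemma twist_mul {r : ℕ} {u : Fin r → ℂ} (hu : ∀ i, u i ≠ 0)
    (f g : AddMonoidAlgebra ℂ (Fin r → ℤ)) :
    twist u (f * g) = twist u f * twist u g := by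
  classical
  ext x
  rw [twist_apply, AddMonoidAlgebra.coeff_mul, AddMonoidAlgebra.coeff_mul]
  rw [Finsupp.sum_of_support_subset (twist u f).coeff (support_twist_subset u f) _
    (by intros; simp)]
  rw [Finsupp.sum_mul, Finsupp.sum]
  refine Finset.sum_congr rfl fun a ha => ?_
  rw [Finsupp.sum_of_support_subset (twist u g).coeff (support_twist_subset u g) _
    (by intros; simp)]
  rw [Finsupp.sum_mul, Finsupp.sum]
  refine Finset.sum_congr rfl fun b hb => ?_
  rw [twist_apply, twist_apply]
  by_cases h : a + b = x
  · simp only [h, if_true]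
    subst h
    have hU : ∏ i, u i ^ (a + b) i = (∏ i, u i ^ a i) * ∏ i, u i ^ b i := by
      rw [← Finset.prod_mul_distrib]
      exact Finset.prod_congr rfl fun i _ => by
        simpa using zpow_add₀ (hu i) (a i) (b i)
    rw [hU]; ring
  · simp [h]

lemma twist_one {r : ℕ} (u : Fin r → ℂ) : twist u (1 : AddMonoidAlgebra ℂ (Fin r → ℤ)) = 1 := by
  classical
  ext x
  rw [twist_apply]
  by_cases h : x = 0
  · subst h; simp [AddMonoidAlgebra.one_def, AddMonoidAlgebra.coeff_single]
  · simp [AddMonoidAlgebra.one_def, AddMonoidAlgebra.coeff_single, Finsupp.single_apply, Ne.symm h]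

lemma twist_twist {r : ℕ} (u w : Fin r → ℂ) (f : AddMonoidAlgebra ℂ (Fin r → ℤ)) :
    twist u (twist w f) = twist (u * w) f := by
  ext x
  rw [twist_apply, twist_apply, twist_apply, mul_assoc, ← Finset.prod_mul_distrib]
  congr 1
  exact Finset.prod_congr rfl fun i _ => by rw [Pi.mul_apply, mul_zpow]; ring

lemma twist_prod {r : ℕ} {u : Fin r → ℂ} (hu : ∀ i, u i ≠ 0) {ι : Type*} (T : Finset ι)
    (g : ι → AddMonoidAlgebra ℂ (Fin r → ℤ)) :
    twist u (∏ k ∈ T, g k) = ∏ k ∈ T, twist u (g k) := by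
  classical
  induction T using Finset.induction with
  | empty => simpa using twist_one u
  | insert _ _ hk ih => rw [Finset.prod_insert hk, Finset.prod_insert hk, twist_mul hu, ih]

lemma support_twist {r : ℕ} {u : Fin r → ℂ} (hu : ∀ i, u i ≠ 0)
    (f : AddMonoidAlgebra ℂ (Fin r → ℤ)) : (twist u f).coeff.support = f.coeff.support := by
  refine le_antisymm (support_twist_subset u f) fun a ha => ?_
  rw [Finsupp.mem_support_iff] at *
  rw [twist_apply]
  exact mul_ne_zero ha (Finset.prod_ne_zero_iff.mpr fun i _ => zpow_ne_zero _ (hu i))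

def emb {r : ℕ} (j : Fin r → ℤ) : Fin r → ℝ := fun i => (j i : ℝ)

lemma emb_inj {r : ℕ} : Function.Injective (emb (r := r)) := fun a b h =>
  funext fun i => Int.cast_injective (congrFun h i)

lemma emb_add {r : ℕ} (a b : Fin r → ℤ) : emb (a + b) = emb a + emb b := by
  funext i; simp [emb]

lemma emb_nsmul {r : ℕ} (m : ℕ) (a : Fin r → ℤ) : emb (m • a) = (m : ℝ) • emb a := by
  funext i; simp [emb]

lemma extreme_decomp {r : ℕ} {C : Set (Fin r → ℝ)} {v a b : Fin r → ℝ} {m : ℕ}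
    (hv : v ∈ C.extremePoints ℝ) (ha : a ∈ C) (hb : b ∈ (m : ℝ) • C)
    (hab : a + b = ((m : ℝ) + 1) • v) : a = v ∧ b = (m : ℝ) • v := by
  rcases Nat.eq_zero_or_pos m with hm | hm
  · subst hm
    rw [Nat.cast_zero, Set.zero_smul_set ⟨a, ha⟩, Set.mem_zero] at hb
    subst hb
    rw [Nat.cast_zero, zero_add, add_zero, one_smul] at hab
    exact ⟨hab, by simp⟩
  · obtain ⟨b', hb', rfl⟩ := hb
    have hm1 : (0:ℝ) < (m : ℝ) + 1 := by positivity
    have hseg : v ∈ openSegment ℝ a b' := by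
      refine ⟨((m:ℝ)+1)⁻¹, (m:ℝ) * ((m:ℝ)+1)⁻¹, by positivity, by positivity, ?_, ?_⟩
      · field_simp; ring
      · have h2 := congrArg (fun x => ((m:ℝ)+1)⁻¹ • x) hab
        simp only [smul_add, smul_smul] at h2
        rw [inv_mul_cancel₀ (ne_of_gt hm1), one_smul] at h2
        rw [← h2, mul_comm]
    obtain ⟨h1, h2⟩ := (mem_extremePoints.mp hv).2 _ ha _ hb' hseg
    exact ⟨h1, by rw [h2]⟩

lemma support_prod_subset {r : ℕ} {ι : Type*} (S : Finset (Fin r → ℤ)) (hS : S.Nonempty)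
    (T : Finset ι) (g : ι → AddMonoidAlgebra ℂ (Fin r → ℤ))
    (hg : ∀ k ∈ T, (g k).coeff.support ⊆ S) :
    ∀ a ∈ (∏ k ∈ T, g k).coeff.support,
      emb a ∈ (T.card : ℝ) • convexHull ℝ (emb '' (S : Set (Fin r → ℤ))) := by
  classical
  have hC : (convexHull ℝ (emb '' (S : Set (Fin r → ℤ)))).Nonempty :=
    ⟨emb hS.choose, subset_convexHull _ _ ⟨_, hS.choose_spec, rfl⟩⟩
  revert hg
  induction T using Finset.induction with
  | empty =>
    intro _ a ha
    rw [Finset.prod_empty] at ha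
    rw [AddMonoidAlgebra.one_def, AddMonoidAlgebra.coeff_single] at ha
    have ha0 : a = 0 := by simpa using Finsupp.support_single_subset ha
    subst ha0
    rw [Finset.card_empty, Nat.cast_zero, Set.zero_smul_set hC]
    have h0 : emb (0 : Fin r → ℤ) = 0 := funext fun i => by simp [emb]
    rw [h0]; rfl
  | insert k T hk ih =>
    intro hg a ha
    rw [Finset.prod_insert hk] at ha
    obtain ⟨b, hb, c, hc, rfl⟩ := Finset.mem_add.mp (AddMonoidAlgebra.support_coeff_mul_subset _ _ ha)
    have h1 : emb b ∈ convexHull ℝ (emb '' (S : Set (Fin r → ℤ))) :=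
      subset_convexHull _ _ ⟨b, hg k (Finset.mem_insert_self k T) hb, rfl⟩
    have h2 := ih (fun k' hk' => hg k' (Finset.mem_insert_of_mem hk')) c hc
    rw [Finset.card_insert_of_notMem hk, Nat.cast_add, Nat.cast_one, add_comm,
      Convex.add_smul (convex_convexHull ℝ _) zero_le_one (Nat.cast_nonneg _), emb_add]
    exact Set.add_mem_add (by rwa [one_smul]) h2

lemma prod_apply_extreme {r : ℕ} {ι : Type*} (S : Finset (Fin r → ℤ)) {v : Fin r → ℤ}
    (hv : emb v ∈ Set.extremePoints ℝ (convexHull ℝ (emb '' (S : Set (Fin r → ℤ)))))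
    (T : Finset ι) (g : ι → AddMonoidAlgebra ℂ (Fin r → ℤ))
    (hg : ∀ k ∈ T, (g k).coeff.support ⊆ S) :
    (∏ k ∈ T, g k).coeff (T.card • v) = ∏ k ∈ T, (g k).coeff v := by
  classical
  have hS : S.Nonempty := by
    rcases S.eq_empty_or_nonempty with h | h
    · exfalso; have := hv.1; rw [h] at this; simp at this
    · exact h
  revert hg
  induction T using Finset.induction with
  | empty => intro _; simp [AddMonoidAlgebra.one_def]
  | insert k T hk ih =>
    intro hg
    have key : UniqueAdd (g k).coeff.support (∏ k' ∈ T, g k').coeff.support v (T.card • v) := by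
      intro a b ha hb hab
      have h1 : emb a ∈ convexHull ℝ (emb '' (S : Set (Fin r → ℤ))) :=
        subset_convexHull _ _ ⟨a, hg k (Finset.mem_insert_self k T) ha, rfl⟩
      have h2 := support_prod_subset S hS T g
        (fun k' hk' => hg k' (Finset.mem_insert_of_mem hk')) b hb
      have h3 : emb a + emb b = ((T.card : ℝ) + 1) • emb v := by
        rw [← emb_add, hab, emb_add, emb_nsmul, add_smul, one_smul, add_comm]
      obtain ⟨e1, e2⟩ := extreme_decomp hv h1 h2 h3
      exact ⟨emb_inj e1, emb_inj (e2.trans (emb_nsmul _ _).symm) ▸ rfl⟩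
    have hkey := AddMonoidAlgebra.coeff_mul_add_of_uniqueAdd key
    rw [Finset.prod_insert hk, Finset.prod_insert hk, Finset.card_insert_of_notMem hk,
      add_nsmul, one_nsmul, add_comm (T.card • v) v, hkey,
      ih (fun k' hk' => hg k' (Finset.mem_insert_of_mem hk'))]

lemma newton_eq {r : ℕ} (f : AddMonoidAlgebra ℂ (Fin r → ℤ)) :
    newton f = convexHull ℝ (emb '' (f.coeff.support : Set (Fin r → ℤ))) := rfl

lemma convexHull_extreme {r : ℕ} {D : Set (Fin r → ℝ)} (hD : D.Finite) :
    convexHull ℝ ((convexHull ℝ D).extremePoints ℝ) = convexHull ℝ D := by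
  have hcomp : IsCompact (convexHull ℝ D) := hD.isCompact_convexHull ℝ
  have h := closure_convexHull_extremePoints hcomp (convex_convexHull ℝ D)
  have hE : ((convexHull ℝ D).extremePoints ℝ).Finite :=
    hD.subset extremePoints_convexHull_subset
  conv_rhs => rw [← h]
  exact ((IsClosed.closure_eq ((hE.isCompact_convexHull ℝ).isClosed))).symm

lemma cyc_zero_eq {r n : ℕ} (hn : 1 ≤ n) : cyc n (0 : AddMonoidAlgebra ℂ (Fin r → ℤ)) = 0 := by
  have : Nonempty (Fin r → Fin n) := ⟨fun _ => ⟨0, hn⟩⟩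
  rw [cyc]
  apply Finset.prod_eq_zero (Finset.mem_univ (Classical.arbitrary _))
  simp [twist]

lemma newton_cyc {r n : ℕ} (hn : 1 ≤ n) (f : AddMonoidAlgebra ℂ (Fin r → ℤ)) :
    newton (cyc n f) = ((n : ℝ) ^ r) • newton f := by
  classical
  set u : (Fin r → Fin n) → (Fin r → ℂ) :=
    fun k i => Complex.exp (2 * Real.pi * Complex.I * (k i : ℕ) / n) with hu
  have hune : ∀ k i, u k i ≠ 0 := fun k i => Complex.exp_ne_zero _
  have hcyc : cyc n f = ∏ k ∈ Finset.univ, twist (u k) f := rfl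
  have hNn : (Finset.univ : Finset (Fin r → Fin n)).card = n ^ r := by
    simp [Finset.card_univ]
  have hcast : ((n ^ r : ℕ) : ℝ) = (n : ℝ) ^ r := by push_cast; rfl
  rcases eq_or_ne f 0 with rfl | hf
  · rw [cyc_zero_eq hn]
    simp [newton_eq]
  · have hS : f.coeff.support.Nonempty := Finsupp.support_nonempty_iff.mpr (AddMonoidAlgebra.coeff_eq_zero.not.mpr hf)
    have hD : (emb '' (f.coeff.support : Set (Fin r → ℤ))).Finite :=
      (f.coeff.support.finite_toSet.image _)
    apply le_antisymm
    · rw [newton_eq, newton_eq]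
      apply convexHull_min ?_ ((convex_convexHull ℝ _).smul _)
      rintro x ⟨a, ha, rfl⟩
      rw [hcyc] at ha
      have h2 := support_prod_subset f.coeff.support hS Finset.univ (fun k => twist (u k) f)
        (fun k _ => by rw [support_twist (hune k)]) a ha
      rw [hNn, hcast] at h2
      exact h2
    · have hCE := convexHull_extreme hD
      rw [newton_eq f, ← hCE, ← convexHull_smul]
      apply convexHull_min ?_ (convex_convexHull ℝ _)
      rintro x ⟨y, hy, rfl⟩
      have hyD := extremePoints_convexHull_subset hy
      obtain ⟨v, hv, rfl⟩ := hyD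
      have hcoef := prod_apply_extreme f.coeff.support hy Finset.univ (fun k => twist (u k) f)
        (fun k _ => by rw [support_twist (hune k)])
      have hne : (∏ k : Fin r → Fin n, (twist (u k) f).coeff v) ≠ 0 := by
        apply Finset.prod_ne_zero_iff.mpr
        intro k _
        rw [twist_apply]
        exact mul_ne_zero (Finsupp.mem_support_iff.mp hv)
          (Finset.prod_ne_zero_iff.mpr fun i _ => zpow_ne_zero _ (hune k i))
      have hmem : ((Finset.univ : Finset (Fin r → Fin n)).card • v) ∈ (cyc n f).coeff.support := by
        rw [Finsupp.mem_support_iff, hcyc, hcoef]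
        exact hne
      refine subset_convexHull ℝ _ ⟨(Finset.univ : Finset (Fin r → Fin n)).card • v, hmem, ?_⟩
      show emb ((Finset.univ : Finset (Fin r → Fin n)).card • v) = (n : ℝ) ^ r • emb v
      rw [emb_nsmul, hNn, hcast]

lemma exp_nat_aux {n : ℕ} (hn : 1 ≤ n) (m : ℕ) :
    Complex.exp (2 * Real.pi * Complex.I * ((m % n : ℕ) : ℂ) / n) =
      Complex.exp (2 * Real.pi * Complex.I * (m : ℂ) / n) := by
  have hn0 : (n : ℂ) ≠ 0 := Nat.cast_ne_zero.mpr (by omega)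
  conv_rhs => rw [← Nat.mod_add_div m n]
  have hsplit : (2 * (Real.pi : ℂ) * Complex.I * ((m % n + n * (m / n) : ℕ) : ℂ) / n) =
      2 * (Real.pi : ℂ) * Complex.I * ((m % n : ℕ) : ℂ) / n +
        ((m / n : ℕ) : ℂ) * (2 * (Real.pi : ℂ) * Complex.I) := by
    push_cast
    field_simp
  rw [hsplit, Complex.exp_add]
  have h1 : Complex.exp (((m / n : ℕ) : ℂ) * (2 * (Real.pi : ℂ) * Complex.I)) = 1 := by
    have := Complex.exp_int_mul_two_pi_mul_I ((m / n : ℕ) : ℤ)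
    simpa using this
  rw [h1, mul_one]

lemma cyc_dvd {r n : ℕ} (hn : 1 ≤ n) (f : AddMonoidAlgebra ℂ (Fin r → ℤ)) (i₀ : Fin r)
    {a : Fin r → ℤ} (ha : a ∈ (cyc n f).coeff.support) : (n : ℤ) ∣ a i₀ := by
  classical
  haveI : NeZero n := ⟨by omega⟩
  have hn0 : (n : ℂ) ≠ 0 := Nat.cast_ne_zero.mpr (by omega)
  set ζ : ℂ := Complex.exp (2 * Real.pi * Complex.I / n) with hζ
  set w : Fin r → ℂ := fun i => if i = i₀ then ζ else 1 with hwdef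
  have hw : ∀ i, w i ≠ 0 := fun i => by
    dsimp only [w]; split <;> simp [hζ, Complex.exp_ne_zero]
  set u : (Fin r → Fin n) → (Fin r → ℂ) :=
    fun k i => Complex.exp (2 * Real.pi * Complex.I * (k i : ℕ) / n) with hu
  set δ : Fin r → Fin n := fun i => if i = i₀ then 1 else 0 with hδ
  have hshift : ∀ k : Fin r → Fin n, w * u k = u (k + δ) := by
    intro k; funext i
    by_cases h : i = i₀
    · subst h
      show w i * u k i = u (k + δ) i
      have hδi : δ i = 1 := by simp [hδ]
      have hval : (((k + δ) i : Fin n) : ℕ) = ((k i : ℕ) + 1) % n := by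
        rw [Pi.add_apply, hδi, Fin.val_add, Fin.val_one']
        rw [Nat.add_mod ((k i : ℕ)) 1 n, Nat.mod_eq_of_lt (k i).isLt]
      have hwi : w i = ζ := by simp [hwdef]
      rw [hwi]
      show ζ * Complex.exp (2 * Real.pi * Complex.I * ((k i : ℕ) : ℂ) / n)
        = Complex.exp (2 * Real.pi * Complex.I * (((k + δ) i : Fin n) : ℕ) / n)
      rw [hval]
      rw [exp_nat_aux hn ((k i : ℕ) + 1)]
      rw [hζ, ← Complex.exp_add]
      congr 1
      push_cast
      field_simp
      ring
    · show w i * u k i = u (k + δ) i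
      have hδi : δ i = 0 := by simp [hδ, h]
      have hwi : w i = 1 := by simp [hwdef, h]
      rw [hwi, one_mul]
      show Complex.exp (2 * Real.pi * Complex.I * ((k i : ℕ) : ℂ) / n)
        = Complex.exp (2 * Real.pi * Complex.I * (((k + δ) i : Fin n) : ℕ) / n)
      rw [Pi.add_apply, hδi, add_zero]
  have hcyc : cyc n f = ∏ k : Fin r → Fin n, twist (u k) f := rfl
  have key : twist w (cyc n f) = cyc n f := by
    conv_lhs => rw [hcyc]
    rw [twist_prod hw]
    calc (∏ k : Fin r → Fin n, twist w (twist (u k) f))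
        = ∏ k : Fin r → Fin n, twist (u (k + δ)) f := by
          refine Finset.prod_congr rfl fun k _ => ?_
          rw [twist_twist, hshift]
      _ = ∏ k : Fin r → Fin n, twist (u k) f :=
          Fintype.prod_equiv (Equiv.addRight δ) _ _ (fun k => rfl)
      _ = cyc n f := rfl
  have h1 : (twist w (cyc n f)).coeff a = (cyc n f).coeff a * ζ ^ a i₀ := by
    rw [twist_apply]
    congr 1
    calc (∏ i, w i ^ a i) = ∏ i, (if i = i₀ then ζ ^ a i else 1) := by
          refine Finset.prod_congr rfl fun i _ => ?_
          dsimp only [w]; split <;> simp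
      _ = ζ ^ a i₀ := by
          rw [Finset.prod_ite_eq' Finset.univ i₀ (fun i => ζ ^ a i)]
          simp
  rw [key] at h1
  have hca := Finsupp.mem_support_iff.mp ha
  have hζ1 : ζ ^ a i₀ = 1 := by
    rcases mul_right_eq_self₀.mp h1.symm with h | h
    · exact h
    · exact absurd h hca
  have hm : Complex.exp ((a i₀ : ℂ) * (2 * Real.pi * Complex.I / n)) = 1 := by
    rw [Complex.exp_int_mul, ← hζ, hζ1]
  obtain ⟨l, hl⟩ := Complex.exp_eq_one_iff.mp hm
  have h2πI : (2 * (Real.pi : ℂ) * Complex.I) ≠ 0 := by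
    simp [Real.pi_ne_zero, Complex.I_ne_zero, Complex.ofReal_ne_zero]
  have hc : (a i₀ : ℂ) = (l : ℂ) * n := by
    field_simp at hl
    exact hl.trans (mul_comm _ _)
  refine ⟨l, ?_⟩
  have : (a i₀ : ℂ) = ((n * l : ℤ) : ℂ) := by rw [hc]; push_cast; ring
  exact_mod_cast this

lemma finite_lattice {r : ℕ} (K : Set (Fin r → ℝ)) (hK : Bornology.IsBounded K) :
    {j : Fin r → ℤ | emb j ∈ K}.Finite := by
  obtain ⟨C, hC⟩ := hK.subset_closedBall 0
  apply Set.Finite.subset (Set.Finite.pi fun _ : Fin r => Set.finite_Icc (-⌈C⌉) ⌈C⌉)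
  intro j hj
  have hball := hC hj
  rw [Metric.mem_closedBall, dist_zero_right] at hball
  intro i _
  have h1 : ‖emb j i‖ ≤ C := le_trans (norm_le_pi_norm (emb j) i) hball
  rw [Real.norm_eq_abs, abs_le] at h1
  constructor
  · have : (-⌈C⌉ : ℝ) ≤ (j i : ℝ) := by
      calc (-⌈C⌉ : ℝ) ≤ -C := by simpa using Int.le_ceil C
        _ ≤ (j i : ℝ) := h1.1
    exact_mod_cast this
  · have : (j i : ℝ) ≤ (⌈C⌉ : ℝ) := le_trans h1.2 (Int.le_ceil C)
    exact_mod_cast this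

lemma newton_bounded {r : ℕ} (f : AddMonoidAlgebra ℂ (Fin r → ℤ)) (c : ℝ) :
    Bornology.IsBounded (c • newton f) := by
  have hD : (emb '' (f.coeff.support : Set (Fin r → ℤ))).Finite := f.coeff.support.finite_toSet.image _
  have hcomp : IsCompact (newton f) := hD.isCompact_convexHull ℝ
  have : IsCompact (c • newton f) := by
    rw [← Set.image_smul]
    exact hcomp.image (continuous_const_smul c)
  exact this.isBounded

/-- The Newton polytope of the cyclic resultant f̃ₙ is n^r Δ(f), and the number of
nonzero terms of f̃ₙ is at most the number of lattice points of n^{r−1} Δ(f). -/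
theorem stmt14 (r n : ℕ) (hn : 1 ≤ n) (f : AddMonoidAlgebra ℂ (Fin r → ℤ)) :
    newton (cyc n f) = ((n : ℝ) ^ r) • newton f ∧
    (cyc n f).coeff.support.card ≤
      Set.ncard {j : Fin r → ℤ |
        (fun i => (j i : ℝ)) ∈ ((n : ℝ) ^ (r - 1)) • newton f} := by
  refine ⟨newton_cyc hn f, ?_⟩
  show (cyc n f).coeff.support.card ≤
      Set.ncard {j : Fin r → ℤ | emb j ∈ ((n : ℝ) ^ (r - 1)) • newton f}
  rcases eq_or_ne f 0 with rfl | hf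
  · rw [cyc_zero_eq hn]
    simp
  rcases Nat.eq_zero_or_pos r with hr | hr
  · -- r = 0 : the exponent type is a subsingleton
    subst hr
    haveI : Unique (Fin 0 → ℤ) := ⟨⟨fun _ => 0⟩, fun a => funext fun i => i.elim0⟩
    obtain ⟨v, hv⟩ := Finsupp.support_nonempty_iff.mpr (AddMonoidAlgebra.coeff_eq_zero.not.mpr hf)
    have hsub : ∀ s : Finset (Fin 0 → ℤ), s.card ≤ 1 :=
      fun s => Finset.card_le_one.mpr fun a _ b _ => Subsingleton.elim a b
    refine le_trans (hsub _) ?_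
    have hmem : v ∈ {j : Fin 0 → ℤ | emb j ∈ ((n : ℝ)) ^ (0 - 1) • newton f} := by
      have h01 : (0 - 1 : ℕ) = 0 := rfl
      simp only [Set.mem_setOf_eq, h01, pow_zero]
      exact ⟨emb v, subset_convexHull ℝ _ ⟨v, hv, rfl⟩, one_smul _ _⟩
    have hfin : {j : Fin 0 → ℤ | emb j ∈ ((n : ℝ)) ^ (0 - 1) • newton f}.Finite :=
      finite_lattice _ (newton_bounded f _)
    exact (Set.ncard_pos hfin).mpr ⟨v, hmem⟩
  · set ψ : (Fin r → ℤ) → (Fin r → ℤ) := fun a i => a i / (n : ℤ) with hψ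
    have hdvd : ∀ a ∈ (cyc n f).coeff.support, ∀ i, (n : ℤ) ∣ a i :=
      fun a ha i => cyc_dvd hn f i ha
    have hrec : ∀ a ∈ (cyc n f).coeff.support, a = fun i => (n : ℤ) * ψ a i := by
      intro a ha
      funext i
      rw [hψ]
      exact (Int.mul_ediv_cancel' (hdvd a ha i)).symm
    have hL : ∀ a ∈ (cyc n f).coeff.support, emb (ψ a) ∈ ((n : ℝ) ^ (r - 1)) • newton f := by
      intro a ha
      have h1 : emb a ∈ ((n : ℝ) ^ r) • newton f := by
        rw [← newton_cyc hn f]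
        exact subset_convexHull ℝ _ ⟨a, ha, rfl⟩
      obtain ⟨x, hx, hax⟩ := h1
      simp only at hax
      refine ⟨x, hx, ?_⟩
      have hn0 : (n : ℝ) ≠ 0 := Nat.cast_ne_zero.mpr (by omega)
      have hsm : (n : ℝ) • ((n : ℝ) ^ (r - 1) • x) = (n : ℝ) • emb (ψ a) := by
        rw [smul_smul, ← pow_succ', Nat.sub_add_cancel hr, hax]
        funext i
        simp only [Pi.smul_apply, smul_eq_mul, emb]
        conv_lhs => rw [congrFun (hrec a ha) i]
        push_cast
        ring
      exact smul_right_injective (Fin r → ℝ) hn0 hsm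
    have hinj : Set.InjOn ψ (((cyc n f).coeff.support : Finset _) : Set (Fin r → ℤ)) := by
      intro a ha b hb h
      rw [hrec a (Finset.mem_coe.mp ha), hrec b (Finset.mem_coe.mp hb), h]
    calc (cyc n f).coeff.support.card
        = (((cyc n f).coeff.support : Finset _) : Set (Fin r → ℤ)).ncard :=
          (Set.ncard_coe_finset _).symm
      _ = (ψ '' (((cyc n f).coeff.support : Finset _) : Set (Fin r → ℤ))).ncard :=
          (Set.ncard_image_of_injOn hinj).symm
      _ ≤ _ := by
          refine Set.ncard_le_ncard ?_ (finite_lattice _ (newton_bounded f _))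
          rintro _ ⟨a, ha, rfl⟩
          exact hL a (Finset.mem_coe.mp ha)
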